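/- arXiv:1712.07444 — 2 statements merged into one kernel-verified Lean document; each statement's English description precedes it below -/
import Mathlib

section
/- Let Q be a finite quiver, a : i → j an arrow, C(a) = KQe_i/KQa, and X a representation of Q. Then Hom(C(a), X) = 0 if and only if the linear map X_a : X_i → X_j is injective, and Ext¹(C(a), X) = 0 if and only if X_a is surjective. -/
open Quiver

universe w v u

/-- A representation of a quiver `V` over a field `K`: a vector space at each vertex
and a linear map for each arrow. -/
structure QRep (K : Type u) [Field K] (V : Type v) [Quiver.{v} V] where
  space : V → Type w
  [isAddCommGroup : ∀ i, AddCommGroup (space i)]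
  [isModule : ∀ i, Module K (space i)]
  map : ∀ {i j : V}, (i ⟶ j) → (space i →ₗ[K] space j)

attribute [instance] QRep.isAddCommGroup QRep.isModule

/-- A morphism of quiver representations. -/
structure QRepHom {K : Type u} [Field K] {V : Type v} [Quiver.{v} V]
    (X Y : QRep.{w} K V) where
  app : ∀ i, X.space i →ₗ[K] Y.space i
  comm : ∀ {i j : V} (a : i ⟶ j), (Y.map a).comp (app i) = (app j).comp (X.map a)

/-- The projective representation `KQe_i`: at vertex `j` it has basis the paths `i ⟶ j`,
and arrows act by postcomposition. -/
noncomputable def projRep (K : Type u) [Field K] (V : Type v) [Quiver.{v} V] (i : V) :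
    QRep.{max u v} K V where
  space j := Path i j →₀ K
  map a := Finsupp.lmapDomain K K (fun p => p.cons a)

/-- Right multiplication by an arrow `a : i ⟶ j`, as a morphism `KQe_j → KQe_i`. -/
noncomputable def rmulArrow {K : Type u} [Field K] {V : Type v} [Quiver.{v} V]
    {i j : V} (a : i ⟶ j) : QRepHom (projRep K V j) (projRep K V i) where
  app k := Finsupp.lmapDomain K K (fun p : Path j k => (a.toPath).comp p)
  comm := by
    intro k l b
    refine Finsupp.lhom_ext fun p c => ?_
    change Finsupp.mapDomain _ (Finsupp.mapDomain _ (Finsupp.single p c)) =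
      Finsupp.mapDomain _ (Finsupp.mapDomain _ (Finsupp.single p c))
    simp [Finsupp.mapDomain_single, Quiver.Path.comp_cons]

/-- The cokernel representation of a morphism of representations. -/
noncomputable def cokerRep {K : Type u} [Field K] {V : Type v} [Quiver.{v} V]
    {F X : QRep.{w} K V} (f : QRepHom F X) : QRep.{w} K V where
  space i := X.space i ⧸ LinearMap.range (f.app i)
  map {i j} a := Submodule.mapQ _ _ (X.map a) (by
    rintro x ⟨y, rfl⟩
    exact ⟨F.map a y, by
      rw [← LinearMap.comp_apply, ← f.comm, LinearMap.comp_apply]⟩)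

/-- The projection onto the cokernel representation. -/
noncomputable def cokerProj {K : Type u} [Field K] {V : Type v} [Quiver.{v} V]
    {F X : QRep.{w} K V} (f : QRepHom F X) : QRepHom X (cokerRep f) where
  app i := (LinearMap.range (f.app i)).mkQ
  comm {i j} a := Submodule.mapQ_mkQ _ _ (h := by
    rintro x ⟨y, rfl⟩
    exact ⟨F.map a y, by
      rw [← LinearMap.comp_apply, ← f.comm, LinearMap.comp_apply]⟩)

/-- The representation `C(a) = KQe_{t(a)}/KQa` for an arrow `a : i ⟶ j`. -/
noncomputable def Ca {K : Type u} [Field K] {V : Type v} [Quiver.{v} V]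
    {i j : V} (a : i ⟶ j) : QRep.{max u v} K V :=
  cokerRep (rmulArrow (K := K) a)

/-- `Hom(A,B) = 0` in the category of representations. -/
def HomVanishes {K : Type u} [Field K] {V : Type v} [Quiver.{v} V]
    (A B : QRep.{w} K V) : Prop :=
  ∀ θ : QRepHom A B, ∀ (k : V) (x : A.space k), θ.app k x = 0

/-- `u, v` form a short exact sequence `0 → X → E → Z → 0` of representations. -/
def IsSES {K : Type u} [Field K] {V : Type v} [Quiver.{v} V]
    {X E Z : QRep.{w} K V} (u : QRepHom X E) (v : QRepHom E Z) : Prop :=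
  ∀ k : V, Function.Injective (u.app k) ∧ Function.Surjective (v.app k) ∧
    LinearMap.range (u.app k) = LinearMap.ker (v.app k)

/-- `Ext¹(Z,X) = 0`: every short exact sequence `0 → X → E → Z → 0` of
representations splits. -/
def ExtVanishes {K : Type u} [Field K] {V : Type v} [Quiver.{v} V]
    (Z X : QRep.{w} K V) : Prop :=
  ∀ (E : QRep.{w} K V) (u : QRepHom X E) (v : QRepHom E Z), IsSES u v →
    ∃ s : QRepHom Z E, ∀ k : V, (v.app k).comp (s.app k) = LinearMap.id

attribute [reducible] projRep Ca

section Aux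

variable {K : Type u} [Field K] {V : Type v} [Quiver.{v} V]

lemma QRepHom.comm_apply {X Y : QRep.{w} K V} (f : QRepHom X Y) {i j : V} (a : i ⟶ j)
    (x : X.space i) : Y.map a (f.app i x) = f.app j (X.map a x) :=
  DFunLike.congr_fun (f.comm a) x

noncomputable def QRepHom.comp' {A B C : QRep.{w} K V} (g : QRepHom B C) (f : QRepHom A B) :
    QRepHom A C where
  app k := (g.app k).comp (f.app k)
  comm a := by
    ext x
    simp [g.comm_apply, f.comm_apply]

noncomputable def pathMap (X : QRep.{w} K V) {i : V} :
    ∀ {k : V}, Path i k → (X.space i →ₗ[K] X.space k)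
  | _, Path.nil => LinearMap.id
  | _, Path.cons p b => (X.map b).comp (pathMap X p)

lemma pathMap_comp (X : QRep.{w} K V) {i m : V} (q : Path i m) :
    ∀ {k : V} (p : Path m k) (x : X.space i),
      pathMap X (q.comp p) x = pathMap X p (pathMap X q x)
  | _, Path.nil, x => by simp [pathMap]
  | _, Path.cons p b, x => by
      simp [pathMap, Quiver.Path.comp_cons, pathMap_comp X q p x]

lemma app_pathMap {X Y : QRep.{w} K V} (f : QRepHom X Y) {i : V} :
    ∀ {k : V} (p : Path i k) (x : X.space i),
      f.app k (pathMap X p x) = pathMap Y p (f.app i x)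
  | _, Path.nil, x => rfl
  | _, Path.cons p b, x => by
      simp [pathMap, ← f.comm_apply, app_pathMap f p x]

lemma pathMap_proj_single (i : V) :
    ∀ {k : V} (p : Path i k),
      pathMap (projRep K V i) p (Finsupp.single Path.nil (1 : K)) = Finsupp.single p 1
  | _, Path.nil => rfl
  | _, Path.cons p b => by
      simp only [pathMap, LinearMap.comp_apply]
      rw [pathMap_proj_single i p]
      simp [projRep, Finsupp.lmapDomain_apply, Finsupp.mapDomain_single]

noncomputable def yonedaHom (X : QRep.{max u v} K V) (i : V) (x : X.space i) :
    QRepHom (projRep K V i) X where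
  app k := Finsupp.lift (X.space k) K (Path i k) (fun p => pathMap X p x)
  comm a := Finsupp.lhom_ext fun p c => by
    simp [projRep, Finsupp.mapDomain_single, pathMap, Finsupp.lift_apply,
      Finsupp.sum_single_index]

lemma yonedaHom_single (X : QRep.{max u v} K V) (i : V) (x : X.space i) {k : V}
    (p : Path i k) (c : K) :
    (yonedaHom X i x).app k (Finsupp.single p c) = c • pathMap X p x := by
  show (Finsupp.lift (X.space k) K (Path i k) (fun p => pathMap X p x)) (Finsupp.single p c)
      = c • pathMap X p x
  rw [Finsupp.lift_apply, Finsupp.sum_single_index (by simp)]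

lemma hom_app_single {X : QRep.{max u v} K V} {i : V} (φ : QRepHom (projRep K V i) X) :
    ∀ {k : V} (p : Path i k) (c : K),
      φ.app k (Finsupp.single p c) = c • pathMap X p (φ.app i (Finsupp.single Path.nil 1))
  | _, Path.nil, c => by
      rw [show (Finsupp.single (Path.nil : Path i i) c)
            = c • Finsupp.single (Path.nil : Path i i) (1 : K) by simp, map_smul]
      rfl
  | _, Path.cons p b, c => by
      have h : (Finsupp.single (p.cons b) c)
          = (projRep K V i).map b (Finsupp.single p c) := by
        simp [projRep, Finsupp.mapDomain_single]
      rw [h, ← φ.comm_apply, hom_app_single φ p c, map_smul]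
      rfl

lemma single_comp_mem_range {i j : V} (a : i ⟶ j) {k : V} (p : Path j k) (c : K) :
    Finsupp.single (a.toPath.comp p) c
      ∈ LinearMap.range ((rmulArrow (K := K) a).app k) :=
  ⟨Finsupp.single p c, Finsupp.mapDomain_single⟩

lemma rmulArrow_app_injective {i j : V} (a : i ⟶ j) (k : V) :
    Function.Injective ((rmulArrow (K := K) a).app k) := by
  intro x y h
  exact Finsupp.mapDomain_injective (Quiver.Path.comp_injective_right a.toPath)
    (by simpa [rmulArrow, Finsupp.lmapDomain_apply] using h)

noncomputable def liftCoker {F X Y : QRep.{w} K V} (f : QRepHom F X) (φ : QRepHom X Y)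
    (h : ∀ k, LinearMap.range (f.app k) ≤ LinearMap.ker (φ.app k)) :
    QRepHom (cokerRep f) Y where
  app k := Submodule.liftQ _ (φ.app k) (h k)
  comm {k l} b := by
    refine Submodule.linearMap_qext _ ?_
    ext x
    exact φ.comm_apply b x

end Aux
section Push

variable {K : Type u} [Field K] {V : Type v} [Quiver.{v} V]

noncomputable def pushN {F G X : QRep.{w} K V} (f : QRepHom F X) (g : QRepHom F G) (k : V) :
    Submodule K (X.space k × G.space k) :=
  LinearMap.range ((f.app k).prod (-(g.app k)))

lemma mem_pushN {F G X : QRep.{w} K V} (f : QRepHom F X) (g : QRepHom F G) (k : V)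
    (w : F.space k) : (f.app k w, -(g.app k w)) ∈ pushN f g k :=
  ⟨w, rfl⟩

noncomputable def pushRep {F G X : QRep.{w} K V} (f : QRepHom F X) (g : QRepHom F G) :
    QRep.{w} K V where
  space k := (X.space k × G.space k) ⧸ pushN f g k
  map {k l} b := Submodule.mapQ _ _ ((X.map b).prodMap (G.map b)) (by
    rintro _ ⟨w, rfl⟩
    refine ⟨F.map b w, ?_⟩
    show (f.app l (F.map b w), -(g.app l (F.map b w)))
      = ((X.map b).prodMap (G.map b)) (f.app k w, -(g.app k w))
    show (f.app l (F.map b w), -(g.app l (F.map b w)))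
      = (X.map b (f.app k w), G.map b (-(g.app k w)))
    rw [map_neg, f.comm_apply, g.comm_apply])

noncomputable def pushInl {F G X : QRep.{w} K V} (f : QRepHom F X) (g : QRepHom F G) :
    QRepHom X (pushRep f g) where
  app k := (pushN f g k).mkQ.comp (LinearMap.inl K _ _)
  comm {k l} b := by
    ext x
    show Submodule.Quotient.mk (X.map b x, G.map b 0)
      = Submodule.Quotient.mk (X.map b x, (0 : G.space l))
    rw [map_zero]

noncomputable def pushInr {F G X : QRep.{w} K V} (f : QRepHom F X) (g : QRepHom F G) :
    QRepHom G (pushRep f g) where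
  app k := (pushN f g k).mkQ.comp (LinearMap.inr K _ _)
  comm {k l} b := by
    ext x
    show Submodule.Quotient.mk (X.map b 0, G.map b x)
      = Submodule.Quotient.mk ((0 : X.space l), G.map b x)
    rw [map_zero]

noncomputable def pushSnd {F G X : QRep.{w} K V} (f : QRepHom F X) (g : QRepHom F G) :
    QRepHom (pushRep f g) (cokerRep g) where
  app k := Submodule.liftQ _ ((LinearMap.range (g.app k)).mkQ.comp (LinearMap.snd K _ _)) (by
    rintro _ ⟨w, rfl⟩
    show (LinearMap.range (g.app k)).mkQ (-(g.app k w)) = 0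
    rw [Submodule.mkQ_apply]
    exact (Submodule.Quotient.mk_eq_zero _).2 (neg_mem ⟨w, rfl⟩))
  comm {k l} b := by
    refine Submodule.linearMap_qext _ ?_
    refine LinearMap.ext fun x => ?_
    rfl

lemma pushInl_f_eq {F G X : QRep.{w} K V} (f : QRepHom F X) (g : QRepHom F G) (k : V)
    (w : F.space k) :
    (pushInl f g).app k (f.app k w) = (pushInr f g).app k (g.app k w) := by
  show (Submodule.Quotient.mk (f.app k w, 0) : _ ⧸ pushN f g k)
    = Submodule.Quotient.mk (0, g.app k w)
  rw [Submodule.Quotient.eq]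
  refine ⟨w, ?_⟩
  show (f.app k w, -(g.app k w)) = (f.app k w - 0, 0 - g.app k w)
  rw [sub_zero, zero_sub]

lemma pushSnd_inr {F G X : QRep.{w} K V} (f : QRepHom F X) (g : QRepHom F G) (k : V)
    (m : G.space k) :
    (pushSnd f g).app k ((pushInr f g).app k m) = (LinearMap.range (g.app k)).mkQ m := rfl

lemma pushIsSES {F G X : QRep.{w} K V} (f : QRepHom F X) (g : QRepHom F G)
    (hg : ∀ k, Function.Injective (g.app k)) :
    IsSES (pushInl f g) (pushSnd f g) := by
  intro k
  refine ⟨?_, ?_, ?_⟩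
  · refine (injective_iff_map_eq_zero _).2 fun x hx => ?_
    have hx' : ((x, 0) : X.space k × G.space k) ∈ pushN f g k :=
      (Submodule.Quotient.mk_eq_zero _).1 hx
    obtain ⟨w, hw⟩ := hx'
    have h2 : -(g.app k w) = (0 : G.space k) := congrArg Prod.snd hw
    have hw0 : w = 0 := hg k (by rw [show g.app k w = 0 from by simpa using h2, map_zero])
    have h1 : f.app k w = x := congrArg Prod.fst hw
    rw [← h1, hw0, map_zero]
  · intro y
    obtain ⟨m, rfl⟩ := Submodule.mkQ_surjective _ y
    exact ⟨(pushN f g k).mkQ (0, m), rfl⟩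
  · ext e
    constructor
    · rintro ⟨x, rfl⟩
      refine LinearMap.mem_ker.2 ?_
      show (LinearMap.range (g.app k)).mkQ 0 = 0
      rw [map_zero]
    · intro he
      obtain ⟨⟨x, m⟩, rfl⟩ := Submodule.mkQ_surjective _ e
      have hm : m ∈ LinearMap.range (g.app k) :=
        (Submodule.Quotient.mk_eq_zero _).1 (LinearMap.mem_ker.1 he)
      obtain ⟨w, rfl⟩ := hm
      refine ⟨x + f.app k w, ?_⟩
      show (Submodule.Quotient.mk (x + f.app k w, 0) : _ ⧸ pushN f g k)
        = Submodule.Quotient.mk (x, g.app k w)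
      rw [Submodule.Quotient.eq]
      refine ⟨w, ?_⟩
      show (f.app k w, -(g.app k w)) = (x + f.app k w - x, 0 - g.app k w)
      rw [add_sub_cancel_left, zero_sub]
end Push

/-- For an arrow `a : i → j` of a finite quiver and a finite-dimensional
representation `X`: `Hom(C(a),X) = 0` iff `X_a` is injective, and
`Ext¹(C(a),X) = 0` iff `X_a` is surjective. -/
theorem hom_ext_Ca_iff {K : Type u} [Field K] {V : Type v} [Quiver.{v} V]
    [Fintype V] [∀ i j : V, Fintype (i ⟶ j)] {i j : V} (a : i ⟶ j)
    (X : QRep.{max u v} K V) [∀ k, FiniteDimensional K (X.space k)] :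
    (HomVanishes (Ca (K := K) a) X ↔ Function.Injective (X.map a)) ∧
    (ExtVanishes (Ca (K := K) a) X ↔ Function.Surjective (X.map a)) := by
  -- notation
  set r := rmulArrow (K := K) a with hr
  set cp : QRepHom (projRep K V i) (Ca (K := K) a) :=
    cokerProj (rmulArrow (K := K) a) with hcp
  set n₁ : (projRep K V i).space i := Finsupp.single Path.nil 1 with hn₁
  -- the class of anything in the image of `r` in `Ca` is zero
  have hclass : ∀ (k : V) (p : Path j k) (c : K),
      cp.app k (Finsupp.single (a.toPath.comp p) c) = 0 := by
    intro k p c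
    exact (Submodule.Quotient.mk_eq_zero _).2 (single_comp_mem_range a p c)
  constructor
  · constructor
    · -- HomVanishes → Injective
      intro hv
      rw [← LinearMap.ker_eq_bot, LinearMap.ker_eq_bot']
      intro x hx
      have hker : ∀ k, LinearMap.range (r.app k)
          ≤ LinearMap.ker ((yonedaHom X i x).app k) := by
        intro k
        rw [LinearMap.range_le_ker_iff]
        refine Finsupp.lhom_ext fun p c => ?_
        show (yonedaHom X i x).app k (r.app k (Finsupp.single p c)) = 0
        rw [show r.app k (Finsupp.single p c)
              = Finsupp.single (a.toPath.comp p) c from Finsupp.mapDomain_single,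
          yonedaHom_single, pathMap_comp,
          show pathMap X a.toPath x = X.map a x from rfl, hx, map_zero, smul_zero]
      have h0 := hv (liftCoker r (yonedaHom X i x) hker) i (cp.app i n₁)
      have h2 : (yonedaHom X i x).app i n₁ = 0 := h0
      rw [hn₁, yonedaHom_single] at h2
      simpa [pathMap] using h2
    · -- Injective → HomVanishes
      intro hinj θ k y
      have hx0 : (θ.comp' cp).app i n₁ = 0 := by
        apply hinj
        rw [map_zero, (θ.comp' cp).comm_apply,
          show (projRep K V i).map a n₁ = Finsupp.single a.toPath 1 from
            Finsupp.mapDomain_single]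
        show θ.app j (cp.app j (Finsupp.single a.toPath 1)) = 0
        rw [show (Finsupp.single a.toPath (1 : K))
              = Finsupp.single (a.toPath.comp Path.nil) 1 from rfl, hclass, map_zero]
      obtain ⟨m, rfl⟩ :=
        Submodule.mkQ_surjective (LinearMap.range (r.app k)) y
      have hz : (θ.comp' cp).app k = 0 := Finsupp.lhom_ext fun p c => by
        rw [LinearMap.zero_apply]
        have h := hom_app_single (θ.comp' cp) p c
        rw [show (Finsupp.single (Path.nil : Path i i) (1 : K)) = n₁ from rfl, hx0,
          map_zero, smul_zero] at h
        exact h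
      show (θ.comp' cp).app k m = 0
      rw [hz, LinearMap.zero_apply]
  · constructor
    · -- ExtVanishes → Surjective
      intro hext z
      obtain ⟨s, hs⟩ := hext (pushRep (yonedaHom X j z) r)
        (pushInl (yonedaHom X j z) r) (pushSnd (yonedaHom X j z) r)
        (pushIsSES _ _ (rmulArrow_app_injective a))
      have hvs : ∀ (k : V) (w : (Ca (K := K) a).space k),
          (pushSnd (yonedaHom X j z) r).app k (s.app k w) = w := by
        intro k w
        have h7 := DFunLike.congr_fun (hs k) w
        simpa using h7
      have hv0 : (pushSnd (yonedaHom X j z) r).app i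
          ((pushInr (yonedaHom X j z) r).app i n₁ - s.app i (cp.app i n₁)) = 0 := by
        rw [map_sub, hvs,
          show (pushSnd (yonedaHom X j z) r).app i
              ((pushInr (yonedaHom X j z) r).app i n₁)
            = cp.app i n₁ from pushSnd_inr _ _ _ _, sub_self]
      have he₀mem : (pushInr (yonedaHom X j z) r).app i n₁ - s.app i (cp.app i n₁)
          ∈ LinearMap.range ((pushInl (yonedaHom X j z) r).app i) := by
        rw [(pushIsSES (yonedaHom X j z) r (rmulArrow_app_injective a) i).2.2]
        exact LinearMap.mem_ker.2 hv0
      obtain ⟨y, hy⟩ := he₀mem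
      refine ⟨y, (pushIsSES (yonedaHom X j z) r (rmulArrow_app_injective a) j).1 ?_⟩
      -- show uu.app j (X.map a y) = uu.app j z
      rw [← (pushInl (yonedaHom X j z) r).comm_apply, hy, map_sub]
      have hpiece1 : (pushRep (yonedaHom X j z) r).map a
            ((pushInr (yonedaHom X j z) r).app i n₁)
          = (pushInl (yonedaHom X j z) r).app j z := by
        rw [(pushInr (yonedaHom X j z) r).comm_apply,
          show (projRep K V i).map a n₁ = Finsupp.single a.toPath 1 from
            Finsupp.mapDomain_single,
          show (Finsupp.single a.toPath (1 : K))
              = r.app j (Finsupp.single Path.nil 1) from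
            (Finsupp.mapDomain_single
              (f := fun p : Path j j => a.toPath.comp p) (a := Path.nil) (b := (1 : K))).symm,
          ← pushInl_f_eq (yonedaHom X j z) r j (Finsupp.single Path.nil 1),
          show (yonedaHom X j z).app j (Finsupp.single Path.nil 1)
              = (1 : K) • pathMap X Path.nil z from yonedaHom_single X j z _ _,
          show (1 : K) • pathMap X Path.nil z = z from by simp [pathMap]]
      have hpiece2 : (pushRep (yonedaHom X j z) r).map a (s.app i (cp.app i n₁)) = 0 := by
        rw [s.comm_apply,
          show (Ca (K := K) a).map a (cp.app i n₁)
              = cp.app j ((projRep K V i).map a n₁) from rfl,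
          show (projRep K V i).map a n₁ = Finsupp.single a.toPath 1 from
            Finsupp.mapDomain_single,
          show (Finsupp.single a.toPath (1 : K))
              = Finsupp.single (a.toPath.comp Path.nil) 1 from rfl,
          hclass, map_zero]
      rw [hpiece1, hpiece2, sub_zero]
    · -- Surjective → ExtVanishes
      intro hsurj E uv vv hses
      obtain ⟨ε, hε⟩ := (hses i).2.1 (cp.app i n₁)
      have hker0 : vv.app j (E.map a ε) = 0 := by
        rw [← vv.comm_apply, hε,
          show (Ca (K := K) a).map a (cp.app i n₁)
              = cp.app j ((projRep K V i).map a n₁) from rfl,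
          show (projRep K V i).map a n₁ = Finsupp.single a.toPath 1 from
            Finsupp.mapDomain_single,
          show (Finsupp.single a.toPath (1 : K))
              = Finsupp.single (a.toPath.comp Path.nil) 1 from rfl,
          hclass]
      have hmem : E.map a ε ∈ LinearMap.range (uv.app j) := by
        rw [(hses j).2.2]
        exact LinearMap.mem_ker.2 hker0
      obtain ⟨x, hx⟩ := hmem
      obtain ⟨y, rfl⟩ := hsurj x
      have hε'v : vv.app i (ε - uv.app i y) = cp.app i n₁ := by
        have h5 : vv.app i (uv.app i y) = 0 := by
          refine LinearMap.mem_ker.1 ?_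
          rw [← (hses i).2.2]
          exact LinearMap.mem_range_self _ y
        rw [map_sub, hε, h5, sub_zero]
      have hε'a : E.map a (ε - uv.app i y) = 0 := by
        rw [map_sub, uv.comm_apply, hx, sub_self]
      have hker2 : ∀ k, LinearMap.range (r.app k)
          ≤ LinearMap.ker ((yonedaHom E i (ε - uv.app i y)).app k) := by
        intro k
        rw [LinearMap.range_le_ker_iff]
        refine Finsupp.lhom_ext fun p c => ?_
        show (yonedaHom E i (ε - uv.app i y)).app k (r.app k (Finsupp.single p c)) = 0
        rw [show r.app k (Finsupp.single p c)
              = Finsupp.single (a.toPath.comp p) c from Finsupp.mapDomain_single,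
          yonedaHom_single, pathMap_comp,
          show pathMap E a.toPath (ε - uv.app i y)
              = E.map a (ε - uv.app i y) from rfl,
          hε'a, map_zero, smul_zero]
      refine ⟨liftCoker r (yonedaHom E i (ε - uv.app i y)) hker2, fun k => ?_⟩
      refine Submodule.linearMap_qext _ ?_
      refine Finsupp.lhom_ext fun p c => ?_
      show vv.app k ((yonedaHom E i (ε - uv.app i y)).app k (Finsupp.single p c))
        = cp.app k (Finsupp.single p c)
      rw [yonedaHom_single, map_smul, app_pathMap vv p (ε - uv.app i y), hε'v]
      have h6 := app_pathMap cp p n₁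
      rw [hn₁, pathMap_proj_single] at h6
      rw [← h6, ← map_smul,
        show c • (Finsupp.single p (1 : K)) = Finsupp.single p c from by
          simp [Finsupp.smul_single]]
end

section
/- Let Q be a finite quiver, I ⊆ Q_1 a set of arrows such that Q has no oriented I-cycles (no cyclic word in arrows of Q_1 and formal inverses of arrows of I, without immediate cancellations, forming a closed walk). Then I can be enumerated I = {a_1, …, a_s} such that for all i ≤ j, every path from t(a_j) to h(a_i) is of the form qa_j or a_iq for some path q. -/
open Quiver

universe v

/-- An oriented `A`-cycle in a quiver: a cyclic word `w_0 w_1 ⋯ w_{n-1}`, `n ≥ 1`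
(indices mod `n`), each letter either an arrow of the quiver or a formal inverse of an
arrow in `A`, consecutive letters not inverse to each other, and `t(w_k) = h(w_{k+1})`.
Here `vert k = h(w_k)`, so the letter `w_k` goes from `vert (k+1)` to `vert k`:
it is either an arrow `vert (k+1) ⟶ vert k`, or the formal inverse of an arrow
`vert k ⟶ vert (k+1)` belonging to `A`. -/
structure OrientedCycle {V : Type v} [Quiver.{v+1} V]
    (A : ∀ i j : V, Set (i ⟶ j)) where
  n : ℕ
  npos : 0 < n
  vert : ZMod n → V
  letter : ∀ k : ZMod n,
    (vert (k + 1) ⟶ vert k) ⊕ {a : vert k ⟶ vert (k + 1) // a ∈ A _ _}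
  reduced₁ : ∀ (k : ZMod n) (x : vert (k + 1) ⟶ vert k)
    (y : vert (k + 1) ⟶ vert (k + 1 + 1)) (hy : y ∈ A _ _),
    letter k = Sum.inl x → letter (k + 1) = Sum.inr ⟨y, hy⟩ →
    (⟨vert (k + 1), vert k, x⟩ : Σ i j : V, i ⟶ j) ≠ ⟨vert (k + 1), vert (k + 1 + 1), y⟩
  reduced₂ : ∀ (k : ZMod n) (x : vert k ⟶ vert (k + 1)) (hx : x ∈ A _ _)
    (y : vert (k + 1 + 1) ⟶ vert (k + 1)),
    letter k = Sum.inr ⟨x, hx⟩ → letter (k + 1) = Sum.inl y →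
    (⟨vert k, vert (k + 1), x⟩ : Σ i j : V, i ⟶ j) ≠ ⟨vert (k + 1 + 1), vert (k + 1), y⟩

namespace OCAux

variable {V : Type v} [Quiver.{v+1} V]

/-- A step of a mixed walk: a direction (`true` = the arrow is traversed forwards)
together with an arrow of the quiver, packed as a sigma type. -/
abbrev QStep (V : Type v) [Quiver.{v+1} V] := Bool × (Σ i j : V, i ⟶ j)

def stepSrc (s : QStep V) : V := if s.1 then s.2.1 else s.2.2.1
def stepDst (s : QStep V) : V := if s.1 then s.2.2.1 else s.2.1

def castHom {a b c d : V} (h1 : a = c) (h2 : b = d) (f : a ⟶ b) : c ⟶ d :=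
  h1 ▸ h2 ▸ f

lemma castHom_sigma {a b c d : V} (h1 : a = c) (h2 : b = d) (f : a ⟶ b) :
    (⟨c, d, castHom h1 h2 f⟩ : Σ i j : V, i ⟶ j) = ⟨a, b, f⟩ := by
  subst h1; subst h2; rfl

lemma castHom_mem (I : ∀ i j : V, Set (i ⟶ j)) {a b c d : V} (h1 : a = c) (h2 : b = d)
    (f : a ⟶ b) (hf : f ∈ I a b) : castHom h1 h2 f ∈ I c d := by
  subst h1; subst h2; exact hf

section mkCycle

variable (I : ∀ i j : V, Set (i ⟶ j)) (n : ℕ)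
  (vert : ZMod n → V) (dir : ZMod n → Bool) (arr : ZMod n → Σ i j : V, i ⟶ j)
  (hfwd : ∀ k, dir k = true → (arr k).1 = vert (k + 1) ∧ (arr k).2.1 = vert k)
  (hbwd : ∀ k, dir k = false → ((arr k).1 = vert k ∧ (arr k).2.1 = vert (k + 1)) ∧
    (arr k).2.2 ∈ I (arr k).1 (arr k).2.1)

def mkLetter (k : ZMod n) :
    (vert (k + 1) ⟶ vert k) ⊕ {a : vert k ⟶ vert (k + 1) // a ∈ I _ _} :=
  if h : dir k = true then
    Sum.inl (castHom (hfwd k h).1 (hfwd k h).2 (arr k).2.2)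
  else
    Sum.inr ⟨castHom (hbwd k (by simpa using h)).1.1 (hbwd k (by simpa using h)).1.2
        (arr k).2.2,
      castHom_mem I _ _ _ (hbwd k (by simpa using h)).2⟩

lemma mkLetter_inl {k : ZMod n} {x : vert (k + 1) ⟶ vert k}
    (h : mkLetter I n vert dir arr hfwd hbwd k = Sum.inl x) :
    dir k = true ∧ (⟨vert (k + 1), vert k, x⟩ : Σ i j : V, i ⟶ j) = arr k := by
  by_cases hk : dir k = true
  · refine ⟨hk, ?_⟩
    rw [mkLetter, dif_pos hk] at h
    obtain rfl : castHom (hfwd k hk).1 (hfwd k hk).2 (arr k).2.2 = x := by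
      simpa using h
    exact castHom_sigma _ _ _
  · rw [mkLetter, dif_neg hk] at h
    exact absurd h (by simp)

lemma mkLetter_inr {k : ZMod n} {y : vert k ⟶ vert (k + 1)} {hy : y ∈ I _ _}
    (h : mkLetter I n vert dir arr hfwd hbwd k = Sum.inr ⟨y, hy⟩) :
    dir k = false ∧ (⟨vert k, vert (k + 1), y⟩ : Σ i j : V, i ⟶ j) = arr k := by
  by_cases hk : dir k = true
  · rw [mkLetter, dif_pos hk] at h
    exact absurd h (by simp)
  · refine ⟨by simpa using hk, ?_⟩
    rw [mkLetter, dif_neg hk] at h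
    obtain rfl : castHom (hbwd k (by simpa using hk)).1.1 (hbwd k (by simpa using hk)).1.2
        (arr k).2.2 = y := by
      simpa using h
    exact castHom_sigma _ _ _

def mkCycle (npos : 0 < n)
    (hred : ∀ k, dir k ≠ dir (k + 1) → arr k ≠ arr (k + 1)) :
    OrientedCycle I where
  n := n
  npos := npos
  vert := vert
  letter := mkLetter I n vert dir arr hfwd hbwd
  reduced₁ := by
    intro k x y hy h1 h2 heq
    obtain ⟨hd1, he1⟩ := mkLetter_inl I n vert dir arr hfwd hbwd h1
    obtain ⟨hd2, he2⟩ := mkLetter_inr I n vert dir arr hfwd hbwd h2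
    exact hred k (by rw [hd1, hd2]; simp) (he1.symm.trans (heq.trans he2))
  reduced₂ := by
    intro k x hx y h1 h2 heq
    obtain ⟨hd1, he1⟩ := mkLetter_inr I n vert dir arr hfwd hbwd h1
    obtain ⟨hd2, he2⟩ := mkLetter_inl I n vert dir arr hfwd hbwd h2
    exact hred k (by rw [hd1, hd2]; simp) (he1.symm.trans (heq.trans he2))

end mkCycle

end OCAux

namespace OCAux

variable {V : Type v} [Quiver.{v+1} V]

def mkCycleOfSteps (I : ∀ i j : V, Set (i ⟶ j)) (n : ℕ) (npos : 0 < n)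
    (g : ZMod n → QStep V)
    (hchain : ∀ j, stepDst (g j) = stepSrc (g (j + 1)))
    (hmem : ∀ j, (g j).1 = false → (g j).2.2.2 ∈ I (g j).2.1 (g j).2.2.1)
    (hred : ∀ j, (g j).1 ≠ (g (j + 1)).1 → (g j).2 ≠ (g (j + 1)).2) :
    OrientedCycle I := by
  refine mkCycle I n (fun k => stepSrc (g (-k))) (fun k => (g (-(k+1))).1)
    (fun k => (g (-(k+1))).2) ?_ ?_ npos ?_
  · intro k h
    have hc := hchain (-(k+1))
    have e1 : -(k+1) + 1 = -k := by ring
    rw [e1] at hc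
    constructor
    · simp only [stepSrc, h, if_true]
    · rw [← hc]; simp only [stepDst, h, if_true]
  · intro k h
    have hc := hchain (-(k+1))
    have e1 : -(k+1) + 1 = -k := by ring
    rw [e1] at hc
    refine ⟨⟨?_, ?_⟩, ?_⟩
    · rw [← hc]; simp only [stepDst, h, Bool.false_eq_true, if_false]
    · simp only [stepSrc, h, Bool.false_eq_true, if_false]
    · exact hmem _ h
  · intro k hne
    have e1 : -(k+1+1) + 1 = -(k+1) := by ring
    have := hred (-(k+1+1))
    rw [e1] at this
    exact fun he => (this (Ne.symm hne) he.symm)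

end OCAux

namespace OCAux

variable {V : Type v} [Quiver.{v+1} V]

lemma zmod_succ_val {n : ℕ} [NeZero n] (j : ZMod n) :
    (j + 1).val = (j.val + 1) % n := by
  rw [ZMod.val_add, ZMod.val_one_eq_one_mod, Nat.add_mod_mod]

lemma cyclicChain {α : Type*} {R : α → α → Prop} {L : List α} (hne : L ≠ [])
    (hc : List.Chain' R L) (hw : R (L.getLast hne) (L.head hne)) [NeZero L.length]
    (j : ZMod L.length) :
    R (L.get ⟨j.val, j.val_lt⟩) (L.get ⟨(j + 1).val, (j + 1).val_lt⟩) := by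
  have hval := zmod_succ_val j
  have hjlt : j.val < L.length := j.val_lt
  rcases lt_or_ge (j.val + 1) L.length with hlt | hge
  · have : (j + 1).val = j.val + 1 := by rw [hval, Nat.mod_eq_of_lt hlt]
    have hc' : R (L.get ⟨j.val, j.val_lt⟩) (L.get ⟨j.val + 1, by omega⟩) :=
      List.isChain_iff_getElem.mp hc j.val (by omega)
    convert hc' using 2
    exact Fin.ext this
  · have hj : j.val = L.length - 1 := by omega
    have h0 : (j + 1).val = 0 := by
      rw [hval, hj, Nat.sub_add_cancel (Nat.one_le_iff_ne_zero.mpr (NeZero.ne _)),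
        Nat.mod_self]
    rw [List.getLast_eq_getElem, List.head_eq_getElem] at hw
    simp only [List.get_eq_getElem, hj, h0]
    exact hw

def mkCycleOfList (I : ∀ i j : V, Set (i ⟶ j)) (L : List (QStep V)) (hne : L ≠ [])
    (hchain : List.Chain' (fun s t => stepDst s = stepSrc t) L)
    (hwrap : stepDst (L.getLast hne) = stepSrc (L.head hne))
    (hred : List.Chain' (fun s t : QStep V => s.1 ≠ t.1 → s.2 ≠ t.2) L)
    (hwred : (L.getLast hne).1 ≠ (L.head hne).1 → (L.getLast hne).2 ≠ (L.head hne).2)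
    (hmem : ∀ st ∈ L, st.1 = false → st.2.2.2 ∈ I st.2.1 st.2.2.1) :
    OrientedCycle I := by
  have npos : 0 < L.length := List.length_pos_iff.mpr hne
  haveI : NeZero L.length := ⟨npos.ne'⟩
  refine mkCycleOfSteps I L.length npos (fun k => L.get ⟨k.val, k.val_lt⟩) ?_ ?_ ?_
  · intro j; exact cyclicChain hne hchain hwrap j
  · intro j h; exact hmem _ (L.get_mem _) h
  · intro j; exact cyclicChain hne hred hwred j

end OCAux

namespace OCAux

variable {V : Type v} [Quiver.{v+1} V]

def Ok : List (QStep V) → V → V → Prop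
  | [], u, v => u = v
  | s :: L, u, v => stepSrc s = u ∧ Ok L (stepDst s) v

lemma Ok.append {L1 L2 : List (QStep V)} {u w v : V} (h1 : Ok L1 u w) (h2 : Ok L2 w v) :
    Ok (L1 ++ L2) u v := by
  induction L1 generalizing u with
  | nil => obtain rfl : u = w := h1; simpa using h2
  | cons s L ih => exact ⟨h1.1, ih h1.2⟩

lemma Ok.chain' {L : List (QStep V)} {u v : V} (h : Ok L u v) :
    List.Chain' (fun s t => stepDst s = stepSrc t) L := by
  induction L generalizing u with
  | nil => exact List.isChain_nil
  | cons s L ih =>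
    refine List.isChain_cons.mpr ⟨?_, ih h.2⟩
    intro y hy
    cases L with
    | nil => simp at hy
    | cons t L' =>
      obtain rfl : t = y := by simpa using hy
      exact (h.2.1).symm

lemma Ok.head_src {L : List (QStep V)} {u v : V} (h : Ok L u v) :
    ∀ s ∈ L.head?, stepSrc s = u := by
  cases L with
  | nil => simp
  | cons s L =>
    intro y hy
    rw [List.head?_cons, Option.mem_def, Option.some.injEq] at hy
    subst hy
    exact h.1

lemma Ok.last_dst {L : List (QStep V)} {u v : V} (h : Ok L u v) :
    ∀ s ∈ L.getLast?, stepDst s = v := by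
  induction L generalizing u with
  | nil => simp
  | cons s L ih =>
    cases L with
    | nil =>
      intro y hy
      obtain rfl : s = y := by simpa using hy
      exact h.2
    | cons t L' =>
      intro y hy
      rw [List.getLast?_cons_cons] at hy
      exact ih h.2 y hy

def pathSteps : ∀ {u v : V}, Path u v → List (QStep V)
  | _, _, Path.nil => []
  | _, _, @Path.cons _ _ _ b c p e => pathSteps p ++ [(true, ⟨b, c, e⟩)]

lemma pathSteps_ok {u v : V} (P : Path u v) : Ok (pathSteps P) u v := by
  induction P with
  | nil => simp only [pathSteps]; show u = u; rfl
  | @cons b c p e ih =>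
    have h2 : Ok [(true, (⟨b, c, e⟩ : Σ i j : V, i ⟶ j))] b c := ⟨rfl, rfl⟩
    simp only [pathSteps]
    exact ih.append h2

lemma pathSteps_forward {u v : V} (P : Path u v) : ∀ st ∈ pathSteps P, st.1 = true := by
  induction P with
  | nil => simp [pathSteps]
  | cons p e ih =>
    intro st hst
    simp only [pathSteps, List.mem_append] at hst
    rcases hst with h | h
    · exact ih st h
    · simp only [List.mem_singleton] at h; rw [h]

lemma chain'Red_of_forward {L : List (QStep V)} (h : ∀ st ∈ L, st.1 = true) :
    List.Chain' (fun s t : QStep V => s.1 ≠ t.1 → s.2 ≠ t.2) L := by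
  induction L with
  | nil => exact List.isChain_nil
  | cons s L ih =>
    refine List.isChain_cons.mpr ⟨?_, ih fun st hst => h st (by simp [hst])⟩
    intro y hy hne
    exact absurd ((h s (by simp)).trans
      (h y (List.mem_cons_of_mem s (List.mem_of_mem_head? hy))).symm) hne

lemma pathSteps_length {u v : V} (P : Path u v) : (pathSteps P).length = P.length := by
  induction P with
  | nil => simp [pathSteps]
  | cons p e ih => simp [pathSteps, ih]

lemma path_eq_nil_of_length_zero {u : V} (p : Path u u) (h : p.length = 0) :
    p = Path.nil := by
  cases p with
  | nil => rfl
  | cons q f => simp at h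

lemma pathSteps_head {u v : V} (P : Path u v) (st : QStep V)
    (h : (pathSteps P).head? = some st) :
    ∃ (w : V) (e : u ⟶ w) (r : Path w v),
      st = (true, ⟨u, w, e⟩) ∧ P = e.toPath.comp r := by
  induction P with
  | nil => simp [pathSteps] at h
  | @cons b c p f ih =>
    simp only [pathSteps] at h
    cases hp : pathSteps p with
    | nil =>
      obtain rfl : u = b := by have := pathSteps_ok p; rw [hp] at this; exact this
      obtain rfl : p = Path.nil := path_eq_nil_of_length_zero p
        (by rw [← pathSteps_length, hp]; rfl)
      rw [hp] at h
      simp only [List.nil_append, List.head?_cons, Option.some.injEq] at h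
      exact ⟨c, f, Path.nil, h.symm, rfl⟩
    | cons s l =>
      rw [hp, List.cons_append, List.head?_cons] at h
      obtain rfl : s = st := by simpa using h
      obtain ⟨w, e, r, hst, hP⟩ := ih (by rw [hp]; rfl)
      exact ⟨w, e, r.cons f, hst, by rw [hP]; rfl⟩

end OCAux

namespace OCAux

variable {V : Type v} [Quiver.{v+1} V]

lemma arr_eq_fst {u w u' w' : V} {e : u ⟶ w} {e' : u' ⟶ w'}
    (h : (⟨u, w, e⟩ : Σ i j : V, i ⟶ j) = ⟨u', w', e'⟩) : u = u' :=
  congrArg Sigma.fst h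

lemma arr_eq_elim {u w w' : V} {e : u ⟶ w} {e' : u ⟶ w'}
    (h : (⟨u, w, e⟩ : Σ i j : V, i ⟶ j) = ⟨u, w', e'⟩) :
    ∃ hw : w = w', castHom rfl hw e = e' := by
  have h2 : (⟨w, e⟩ : Σ j : V, u ⟶ j) = ⟨w', e'⟩ :=
    eq_of_heq (Sigma.mk.inj_iff.mp h).2
  obtain ⟨hw, he⟩ := Sigma.mk.inj_iff.mp h2
  subst hw
  exact ⟨rfl, eq_of_heq he⟩

variable (I : ∀ i j : V, Set (i ⟶ j))

/-- The subtype of arrows belonging to `I`. -/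
abbrev SArr := {x : Σ i j : V, i ⟶ j // x.2.2 ∈ I x.1 x.2.1}

/-- `Rel I x y` holds iff there is a "bad" path from the source of `x` to the target
of `y`: one which neither starts with `x` nor ends with `y`. -/
def Rel (x y : SArr I) : Prop :=
  ∃ p : Path x.1.1 y.1.2.1,
    (¬ ∃ r : Path x.1.2.1 y.1.2.1, p = (x.1.2.2).toPath.comp r) ∧
    (¬ ∃ r : Path x.1.1 y.1.1, p = r.cons y.1.2.2)

variable {I}

lemma head_ne (x : SArr I) {w : V} (P : Path x.1.1 w)
    (hP : ¬ ∃ r : Path x.1.2.1 w, P = (x.1.2.2).toPath.comp r) :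
    ∀ st ∈ (pathSteps P).head?, st.2 ≠ x.1 := by
  intro st hst heq
  obtain ⟨w', e, r, hst', hPr⟩ := pathSteps_head P st hst
  rw [hst'] at heq
  obtain ⟨hw, he⟩ := arr_eq_elim (e' := x.1.2.2) heq
  subst hw
  obtain rfl : e = x.1.2.2 := he
  exact hP ⟨r, hPr⟩

lemma last_ne (y : SArr I) {w : V} (P : Path w y.1.2.1)
    (hP : ¬ ∃ r : Path w y.1.1, P = r.cons y.1.2.2) :
    ∀ st ∈ (pathSteps P).getLast?, st.2 ≠ y.1 := by
  intro st hst heq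
  cases P with
  | nil => simp [pathSteps] at hst
  | @cons b c p f =>
    simp only [pathSteps, List.getLast?_concat, Option.mem_def, Option.some.injEq] at hst
    subst hst
    have hb : b = y.1.1 := arr_eq_fst heq
    subst hb
    obtain ⟨hw, he⟩ := arr_eq_elim (e' := y.1.2.2) heq
    obtain rfl : f = y.1.2.2 := he
    exact hP ⟨p, rfl⟩

noncomputable def build : (x : SArr I) → (ch : List (SArr I)) → List.Chain (Rel I) x ch → List (QStep V)
  | _, [], _ => []
  | x, y :: ch, h =>
    pathSteps ((List.chain_cons.mp h).1).choose ++
      (false, y.1) :: build y ch (List.chain_cons.mp h).2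

lemma build_ok : ∀ (ch : List (SArr I)) (x : SArr I) (h : List.Chain (Rel I) x ch),
    Ok (build x ch h) x.1.1 ((ch.getLast?.getD x).1.1) := by
  intro ch
  induction ch with
  | nil => intro x h; show x.1.1 = x.1.1; rfl
  | cons y ch ih =>
    intro x h
    simp only [build]
    have h1 := (List.chain_cons.mp h).1
    refine Ok.append (pathSteps_ok h1.choose) ?_
    refine ⟨rfl, ?_⟩
    have : stepDst (false, y.1) = y.1.1 := rfl
    rw [this]
    have hgetD : ((y :: ch).getLast?.getD x).1.1 = (ch.getLast?.getD y).1.1 := by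
      cases ch with
      | nil => simp
      | cons z ch' =>
        rw [List.getLast?_eq_getLast (l := z :: ch') (by simp)]
        rfl
    rw [hgetD]
    exact ih y (List.chain_cons.mp h).2

end OCAux

namespace OCAux

variable {V : Type v} [Quiver.{v+1} V] {I : ∀ i j : V, Set (i ⟶ j)}

lemma build_mem : ∀ (ch : List (SArr I)) (x : SArr I) (h : List.Chain (Rel I) x ch),
    ∀ st ∈ build x ch h, st.1 = false → st.2.2.2 ∈ I st.2.1 st.2.2.1 := by
  intro ch
  induction ch with
  | nil => intro x h st hst; simp [build] at hst
  | cons y ch ih =>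
    intro x h st hst hf
    simp only [build, List.mem_append, List.mem_cons] at hst
    rcases hst with h1 | h2 | h3
    · exact absurd ((pathSteps_forward _ st h1).symm.trans hf) (by simp)
    · subst h2; exact y.2
    · exact ih y (List.chain_cons.mp h).2 st h3 hf

lemma build_head : ∀ (ch : List (SArr I)) (x : SArr I) (h : List.Chain (Rel I) x ch),
    ∀ st ∈ (build x ch h).head?, st.1 = true → st.2 ≠ x.1 := by
  intro ch
  cases ch with
  | nil => intro x h st hst; simp [build] at hst
  | cons y ch =>
    intro x h st hst htrue
    simp only [build] at hst
    have hxy := (List.chain_cons.mp h).1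
    cases hp : pathSteps hxy.choose with
    | nil =>
      rw [hp, List.nil_append, List.head?_cons, Option.mem_def, Option.some.injEq] at hst
      subst hst
      simp at htrue
    | cons s l =>
      rw [hp, List.cons_append, List.head?_cons, Option.mem_def, Option.some.injEq] at hst
      subst hst
      exact head_ne x hxy.choose hxy.choose_spec.1 _ (by rw [hp]; rfl)

lemma getLast?_cons_ne {α : Type*} (a : α) {l : List α} (h : l ≠ []) :
    (a :: l).getLast? = l.getLast? := by
  cases l with
  | nil => exact absurd rfl h
  | cons b t => exact List.getLast?_cons_cons

lemma build_red : ∀ (ch : List (SArr I)) (x : SArr I) (h : List.Chain (Rel I) x ch),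
    List.Chain' (fun s t : QStep V => s.1 ≠ t.1 → s.2 ≠ t.2) (build x ch h) := by
  intro ch
  induction ch with
  | nil => intro x h; simp [build]; exact List.isChain_nil
  | cons y ch ih =>
    intro x h
    simp only [build]
    have hxy := (List.chain_cons.mp h).1
    rw [List.Chain', List.isChain_append]
    refine ⟨chain'Red_of_forward (pathSteps_forward _), ?_, ?_⟩
    · rw [List.isChain_cons]
      refine ⟨?_, ih y (List.chain_cons.mp h).2⟩
      intro st hst hne
      have hfne : (false : Bool) ≠ st.1 := hne
      have hst1 : st.1 = true := by
        cases h1 : st.1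
        · exact absurd h1.symm hfne
        · rfl
      have hne2 := build_head ch y (List.chain_cons.mp h).2 st hst hst1
      exact fun he => hne2 he.symm
    · intro a ha b hb
      obtain rfl : (false, (y : SArr I).1) = b := by simpa using hb
      intro _
      exact last_ne y hxy.choose hxy.choose_spec.2 a ha

lemma build_ne : ∀ (ch : List (SArr I)) (x : SArr I) (h : List.Chain (Rel I) x ch),
    ch ≠ [] → build x ch h ≠ [] := by
  intro ch x h hne
  cases ch with
  | nil => exact absurd rfl hne
  | cons y ch => simp [build]

lemma build_last : ∀ (ch : List (SArr I)) (x : SArr I) (h : List.Chain (Rel I) x ch)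
    (hne : ch ≠ []), (build x ch h).getLast? = some (false, (ch.getLast hne).1) := by
  intro ch
  induction ch with
  | nil => intro x h hne; exact absurd rfl hne
  | cons y ch ih =>
    intro x h hne
    simp only [build]
    cases ch with
    | nil =>
      simp only [build]
      rw [List.getLast?_concat]
      rfl
    | cons z ch' =>
      have hb := build_ne (z :: ch') y (List.chain_cons.mp h).2 (by simp)
      rw [List.getLast?_append_of_ne_nil _ (by simp),
        getLast?_cons_ne _ hb, ih y (List.chain_cons.mp h).2 (by simp)]
      rfl

end OCAux

namespace OCAux

variable {V : Type v} [Quiver.{v+1} V] {I : ∀ i j : V, Set (i ⟶ j)}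

lemma transGen_irrefl (hnc : IsEmpty (OrientedCycle I)) (a : SArr I) :
    ¬ Relation.TransGen (Rel I) a a := by
  intro hT
  obtain ⟨b, hab, hba⟩ := Relation.TransGen.head'_iff.mp hT
  obtain ⟨l, hl, hlast⟩ := List.exists_isChain_cons_of_relationReflTransGen hba
  have hch : List.Chain (Rel I) a (b :: l) := List.Chain.cons hab hl
  have hne : (b :: l) ≠ [] := by simp
  have hlast' : (b :: l).getLast hne = a := hlast
  set L := build a (b :: l) hch with hL
  have hLne : L ≠ [] := build_ne _ a hch hne
  have hOk : Ok L a.1.1 a.1.1 := by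
    have h0 := build_ok (b :: l) a hch
    rw [List.getLast?_eq_getLast hne, hlast'] at h0
    exact h0
  have hchain := hOk.chain'
  have hwrap : stepDst (L.getLast hLne) = stepSrc (L.head hLne) := by
    have h1 := hOk.last_dst (L.getLast hLne) (by rw [List.getLast?_eq_getLast (l := L) hLne]; rfl)
    have h2 := hOk.head_src (L.head hLne) (by rw [List.head?_eq_head hLne]; rfl)
    rw [h1, h2]
  have hlastL : L.getLast hLne = (false, a.1) := by
    have h0 := build_last (b :: l) a hch hne
    rw [List.getLast?_eq_getLast (l := L) hLne, hlast'] at h0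
    exact Option.some_injective _ h0
  have hwred : (L.getLast hLne).1 ≠ (L.head hLne).1 →
      (L.getLast hLne).2 ≠ (L.head hLne).2 := by
    intro hne2 heq2
    rw [hlastL] at hne2 heq2
    have hf : (false : Bool) ≠ (L.head hLne).1 := hne2
    have h1 : (L.head hLne).1 = true := by
      cases hh : (L.head hLne).1
      · exact absurd hh.symm hf
      · rfl
    have h2 := build_head (b :: l) a hch (L.head hLne)
      (by rw [List.head?_eq_head hLne]; rfl) h1
    exact h2 heq2.symm
  exact hnc.false (mkCycleOfList I L hLne hchain hwrap (build_red _ a hch) hwred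
    (build_mem _ a hch))

end OCAux


/-- If a finite quiver has no oriented `I`-cycles, then `I` can be enumerated as
`a_1, …, a_s` so that for `i ≤ j` every path from `t(a_j)` to `h(a_i)` has the form
`q a_j` or `a_i q`. -/
theorem enumeration_of_no_oriented_cycles {V : Type v} [Quiver.{v+1} V]
    [Fintype V] [∀ i j : V, Fintype (i ⟶ j)]
    (I : ∀ i j : V, Set (i ⟶ j)) (hnc : IsEmpty (OrientedCycle I)) :
    ∃ (s : ℕ) (e : Fin s ≃ {x : Σ i j : V, i ⟶ j // x.2.2 ∈ I x.1 x.2.1}),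
      ∀ p q : Fin s, p ≤ q →
        ∀ path : Path (e q).1.1 (e p).1.2.1,
          (∃ r : Path (e q).1.2.1 (e p).1.2.1,
              path = ((e q).1.2.2).toPath.comp r) ∨
          (∃ r : Path (e q).1.1 (e p).1.1, path = r.cons (e p).1.2.2) := by
  haveI : Fintype (OCAux.SArr I) := Fintype.ofFinite _
  haveI po : IsPartialOrder (OCAux.SArr I) (Relation.ReflTransGen (OCAux.Rel I)) :=
    { refl := fun a => Relation.ReflTransGen.refl
      trans := fun a b c hab hbc => hab.trans hbc
      antisymm := fun a b h1 h2 => by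
        rcases Relation.reflTransGen_iff_eq_or_transGen.mp h1 with heq | hT
        · exact heq.symm
        · exact absurd (Relation.TransGen.trans_right h2 hT) (OCAux.transGen_irrefl hnc b) }
  obtain ⟨t, hlin, hsub⟩ := extend_partialOrder (Relation.ReflTransGen (OCAux.Rel I))
  haveI := hlin
  letI : LinearOrder (OCAux.SArr I) :=
    { le := t
      le_refl := fun a => refl_of t a
      le_trans := fun a b c => trans_of t
      le_antisymm := fun a b h1 h2 => antisymm_of t h1 h2
      le_total := fun a b => total_of t a b
      toDecidableLE := fun a b => Classical.dec _ }
  set f := monoEquivOfFin (OCAux.SArr I) rfl with hf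
  refine ⟨Fintype.card (OCAux.SArr I), f.toEquiv, ?_⟩
  intro p q hpq path
  by_contra hcon
  have hbad : OCAux.Rel I (f q) (f p) :=
    ⟨path, fun h => hcon (Or.inl h), fun h => hcon (Or.inr h)⟩
  have h1 : t (f p) (f q) := f.le_iff_le.mpr hpq
  have h2 : t (f q) (f p) := hsub _ _ (Relation.ReflTransGen.single hbad)
  have heq : f p = f q := le_antisymm h1 h2
  rw [← heq] at hbad
  exact OCAux.transGen_irrefl hnc (f p) (Relation.TransGen.single hbad)
end
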